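/- Let (λₙ)ₙ be a nondecreasing sequence of positive reals tending to infinity with counting bound c·Λ^β ≤ #{n : λₙ² ≤ Λ} ≤ C·Λ^β for Λ ≥ λ₀², where β > 0. Then for any p > β there exist constants c', C' > 0 such that for all N, c'·λ_N^{-2p+2β} ≤ Σ_{n > N} λₙ^{-2p} ≤ C'·λ_N^{-2p+2β}. -/

import Mathlib

open Filter Set



/-- Mean-value / Bernoulli-type inequality for negative powers. -/
lemma stmt8_bern {t y : ℝ} (ht : t < 0) (hy : 2 ≤ y) :
    -t * y ^ (t - 1) ≤ (y - 1) ^ t - y ^ t := by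
  have hy1 : (1 : ℝ) ≤ y - 1 := by linarith
  have hlt : y - 1 < y := by linarith
  obtain ⟨ξ, hξ, hslope⟩ :=
    exists_hasDerivAt_eq_slope (fun x => x ^ t) (fun x => t * x ^ (t - 1)) hlt
      (fun x hx => by
        have hx0 : x ≠ 0 := by
          have : (1:ℝ) ≤ x := le_trans hy1 hx.1
          linarith
        exact (Real.continuousAt_rpow_const x t (Or.inl hx0)).continuousWithinAt)
      (fun x hx => by
        have hx0 : x ≠ 0 := by
          have : (1:ℝ) < x := lt_of_le_of_lt hy1 hx.1
          linarith
        exact Real.hasDerivAt_rpow_const (Or.inl hx0))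
  have hξpos : 0 < ξ := lt_of_lt_of_le (by linarith) (le_of_lt hξ.1)
  have hξy : ξ ≤ y := le_of_lt hξ.2
  have hmono : y ^ (t - 1) ≤ ξ ^ (t - 1) :=
    Real.rpow_le_rpow_of_nonpos hξpos hξy (by linarith)
  have h1 : y ^ t - (y - 1) ^ t = t * ξ ^ (t - 1) := by
    rw [hslope]; ring_nf
  nlinarith [h1, mul_le_mul_of_nonpos_left hmono (le_of_lt ht)]

/-- Telescoping tail bound: `∑_{n≥M+1} n^{-q} ≤ M^{1-q}/(q-1)`. -/
lemma stmt8_tail {q : ℝ} (hq : 1 < q) (M : ℕ) (hM : 1 ≤ M) :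
    (∑' n : ℕ, ((M : ℝ) + 1 + n) ^ (-q)) ≤ (M : ℝ) ^ (1 - q) / (q - 1) := by
  have hM1 : (1 : ℝ) ≤ (M : ℝ) := by exact_mod_cast hM
  have hkey : ∀ K : ℕ, (q - 1) * ∑ n ∈ Finset.range K, ((M : ℝ) + 1 + n) ^ (-q)
      ≤ (M : ℝ) ^ (1 - q) - ((M : ℝ) + K) ^ (1 - q) := by
    intro K
    induction K with
    | zero => simp
    | succ K ih =>
      rw [Finset.sum_range_succ, mul_add]
      have hK : (0:ℝ) ≤ (K:ℝ) := Nat.cast_nonneg K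
      have hb := stmt8_bern (t := 1 - q) (y := (M : ℝ) + 1 + K)
        (by linarith) (by linarith)
      have e1 : -(1 - q) = q - 1 := by ring
      have e2 : (1 - q) - 1 = -q := by ring
      have e3 : ((M : ℝ) + 1 + K) - 1 = (M : ℝ) + K := by ring
      rw [e1, e2, e3] at hb
      have e4 : ((M : ℝ) + (K + 1 : ℕ)) = (M : ℝ) + 1 + K := by push_cast; ring
      rw [e4]
      linarith
  have hnn : ∀ n : ℕ, 0 ≤ ((M : ℝ) + 1 + n) ^ (-q) := fun n => Real.rpow_nonneg (by positivity) _
  refine Real.tsum_le_of_sum_range_le hnn (fun K => ?_)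
  have h := hkey K
  have hnn2 : 0 ≤ ((M : ℝ) + K) ^ (1 - q) := Real.rpow_nonneg (by positivity) _
  have hq1 : 0 < q - 1 := by linarith
  rw [le_div_iff₀ hq1]
  linarith [mul_comm (q-1) (∑ n ∈ Finset.range K, ((M : ℝ) + 1 + n) ^ (-q))]


lemma stmt8_fin (lam : ℕ → ℝ) (htend : Tendsto lam atTop atTop) (Λ : ℝ) :
    {n : ℕ | (lam n) ^ 2 ≤ Λ}.Finite := by
  obtain ⟨M, hM⟩ := eventually_atTop.mp (htend.eventually_gt_atTop (Real.sqrt Λ))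
  refine (Set.finite_Iio M).subset ?_
  intro m hm
  by_contra hmM
  simp only [Set.mem_Iio, not_lt] at hmM
  have h1 : Real.sqrt Λ < lam m := hM m hmM
  have h2 : Real.sqrt Λ ^ 2 < lam m ^ 2 :=
    pow_lt_pow_left₀ h1 (Real.sqrt_nonneg Λ) two_ne_zero
  have h3 : Λ ≤ Real.sqrt Λ ^ 2 := by
    rcases le_or_gt 0 Λ with h | h
    · rw [Real.sq_sqrt h]
    · nlinarith [Real.sqrt_nonneg Λ]
  exact absurd hm (by simp only [Set.mem_setOf_eq]; push_neg; linarith)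

/-- If `lam n ^ 2 ≤ Λ` then the count is at least `n + 1`. -/
lemma stmt8_card_ge (lam : ℕ → ℝ) (hmono : Monotone lam) (hpos : ∀ n, 0 < lam n)
    (htend : Tendsto lam atTop atTop) {Λ : ℝ} {n : ℕ} (h : lam n ^ 2 ≤ Λ) :
    n + 1 ≤ Nat.card {m : ℕ | (lam m) ^ 2 ≤ Λ} := by
  have hsub : Set.Iic n ⊆ {m : ℕ | (lam m) ^ 2 ≤ Λ} := by
    intro m hm
    have : lam m ≤ lam n := hmono hm
    have : lam m ^ 2 ≤ lam n ^ 2 := pow_le_pow_left₀ (hpos m).le this 2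
    exact le_trans this h
  calc n + 1 = (Set.Iic n).ncard := by
        rw [← Finset.coe_Iic, Set.ncard_coe_finset, Nat.card_Iic]
    _ ≤ {m : ℕ | (lam m) ^ 2 ≤ Λ}.ncard :=
        Set.ncard_le_ncard hsub (stmt8_fin lam htend Λ)
    _ = Nat.card {m : ℕ | (lam m) ^ 2 ≤ Λ} := (Nat.card_coe_set_eq _).symm

/-- If the count is at least `n + 1` then `lam n ^ 2 ≤ Λ`. -/
lemma stmt8_card_le (lam : ℕ → ℝ) (hmono : Monotone lam) (hpos : ∀ n, 0 < lam n)
    (htend : Tendsto lam atTop atTop) {Λ : ℝ} {n : ℕ}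
    (h : n + 1 ≤ Nat.card {m : ℕ | (lam m) ^ 2 ≤ Λ}) : lam n ^ 2 ≤ Λ := by
  by_contra hn
  push_neg at hn
  have hsub : {m : ℕ | (lam m) ^ 2 ≤ Λ} ⊆ Set.Iio n := by
    intro m hm
    by_contra hmn
    simp only [Set.mem_Iio, not_lt] at hmn
    have h1 : lam n ≤ lam m := hmono hmn
    have h2 : lam n ^ 2 ≤ lam m ^ 2 := pow_le_pow_left₀ (hpos n).le h1 2
    exact absurd hm (by simp only [Set.mem_setOf_eq]; push_neg; linarith)
  have : Nat.card {m : ℕ | (lam m) ^ 2 ≤ Λ} ≤ n := by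
    rw [Nat.card_coe_set_eq]
    calc {m : ℕ | (lam m) ^ 2 ≤ Λ}.ncard ≤ (Set.Iio n).ncard :=
          Set.ncard_le_ncard hsub (Set.finite_Iio n)
      _ = n := by rw [← Finset.coe_range, Set.ncard_coe_finset, Finset.card_range]
  omega


/-- Two-sided bounds `a (n+1)^{1/β} ≤ lam n ^ 2 ≤ b (n+1)^{1/β}`. -/
lemma stmt8_lam_bounds (lam : ℕ → ℝ) (hmono : Monotone lam) (hpos : ∀ n, 0 < lam n)
    (htend : Filter.Tendsto lam Filter.atTop Filter.atTop)
    (β c C : ℝ) (hβ : 0 < β) (hc : 0 < c) (hC : 0 < C)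
    (hcount : ∀ Λ : ℝ, (lam 0) ^ 2 ≤ Λ →
      c * Λ ^ β ≤ (Nat.card {n : ℕ | (lam n) ^ 2 ≤ Λ} : ℝ) ∧
      (Nat.card {n : ℕ | (lam n) ^ 2 ≤ Λ} : ℝ) ≤ C * Λ ^ β) :
    ∃ a b : ℝ, 0 < a ∧ 0 < b ∧ ∀ n : ℕ,
      a * ((n : ℝ) + 1) ^ β⁻¹ ≤ lam n ^ 2 ∧ lam n ^ 2 ≤ b * ((n : ℝ) + 1) ^ β⁻¹ := by
  refine ⟨(C⁻¹) ^ β⁻¹, max (lam 0 ^ 2) ((c⁻¹) ^ β⁻¹), by positivity,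
    lt_max_of_lt_left (pow_pos (hpos 0) 2), fun n => ?_⟩
  have hn1 : (0:ℝ) < (n : ℝ) + 1 := by positivity
  constructor
  · -- lower bound from upper counting bound
    have hΛ0 : lam 0 ^ 2 ≤ lam n ^ 2 :=
      pow_le_pow_left₀ (hpos 0).le (hmono (Nat.zero_le n)) 2
    have hcard := (hcount (lam n ^ 2) hΛ0).2
    have hge : n + 1 ≤ Nat.card {m : ℕ | (lam m) ^ 2 ≤ lam n ^ 2} :=
      stmt8_card_ge lam hmono hpos htend (le_refl _)
    have h1 : ((n : ℝ) + 1) ≤ C * (lam n ^ 2) ^ β := by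
      have : ((n + 1 : ℕ) : ℝ) ≤ (Nat.card {m : ℕ | (lam m) ^ 2 ≤ lam n ^ 2} : ℝ) := by
        exact_mod_cast hge
      push_cast at this
      linarith
    have h2 : ((n : ℝ) + 1) * C⁻¹ ≤ (lam n ^ 2) ^ β := by
      rw [← div_eq_mul_inv, div_le_iff₀ hC, mul_comm ((lam n ^ 2) ^ β) C]
      exact h1
    have h3 : (((n : ℝ) + 1) * C⁻¹) ^ β⁻¹ ≤ ((lam n ^ 2) ^ β) ^ β⁻¹ :=
      Real.rpow_le_rpow (by positivity) h2 (by positivity)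
    rw [Real.rpow_rpow_inv (by positivity) hβ.ne'] at h3
    rw [Real.mul_rpow hn1.le (by positivity)] at h3
    linarith [h3, mul_comm (((n : ℝ) + 1) ^ β⁻¹) ((C⁻¹ : ℝ) ^ β⁻¹)]
  · -- upper bound from lower counting bound
    set Λ : ℝ := max (lam 0 ^ 2) ((((n : ℝ) + 1) * c⁻¹) ^ β⁻¹) with hΛdef
    have hΛ0 : lam 0 ^ 2 ≤ Λ := le_max_left _ _
    have hcard := (hcount Λ hΛ0).1
    have hΛβ : ((n : ℝ) + 1) * c⁻¹ ≤ Λ ^ β := by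
      have h4 : ((((n : ℝ) + 1) * c⁻¹) ^ β⁻¹) ^ β ≤ Λ ^ β :=
        Real.rpow_le_rpow (by positivity) (le_max_right _ _) hβ.le
      rwa [Real.rpow_inv_rpow (by positivity) hβ.ne'] at h4
    have h5 : ((n : ℝ) + 1) ≤ (Nat.card {m : ℕ | (lam m) ^ 2 ≤ Λ} : ℝ) := by
      have : c * (((n : ℝ) + 1) * c⁻¹) ≤ c * Λ ^ β :=
        mul_le_mul_of_nonneg_left hΛβ hc.le
      have hcc : c * (((n : ℝ) + 1) * c⁻¹) = (n : ℝ) + 1 := by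
        field_simp
      linarith
    have h6 : n + 1 ≤ Nat.card {m : ℕ | (lam m) ^ 2 ≤ Λ} := by
      exact_mod_cast le_trans (by push_cast; linarith : ((n + 1 : ℕ) : ℝ) ≤ (n : ℝ) + 1) h5
    have h7 : lam n ^ 2 ≤ Λ := stmt8_card_le lam hmono hpos htend h6
    refine le_trans h7 (max_le ?_ ?_)
    · have h8 : (1:ℝ) ≤ ((n : ℝ) + 1) ^ β⁻¹ :=
        Real.one_le_rpow (by linarith) (by positivity)
      calc lam 0 ^ 2 ≤ max (lam 0 ^ 2) ((c⁻¹ : ℝ) ^ β⁻¹) := le_max_left _ _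
        _ ≤ max (lam 0 ^ 2) ((c⁻¹ : ℝ) ^ β⁻¹) * ((n : ℝ) + 1) ^ β⁻¹ :=
            le_mul_of_one_le_right (le_trans (by positivity) (le_max_left _ _)) h8
    · rw [Real.mul_rpow hn1.le (by positivity)]
      have : (c⁻¹ : ℝ) ^ β⁻¹ ≤ max (lam 0 ^ 2) ((c⁻¹ : ℝ) ^ β⁻¹) := le_max_right _ _
      nlinarith [Real.rpow_nonneg hn1.le β⁻¹, Real.rpow_nonneg (inv_nonneg.2 hc.le) β⁻¹]

/-- Under a two-sided Weyl-type counting bound with exponent `β > 0`, for any `p > β`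
the tail sums satisfy `c' λ_N^{-2p+2β} ≤ Σ_{n > N} λₙ^{-2p} ≤ C' λ_N^{-2p+2β}`. -/
theorem stmt8 (lam : ℕ → ℝ) (hmono : Monotone lam) (hpos : ∀ n, 0 < lam n)
    (htend : Filter.Tendsto lam Filter.atTop Filter.atTop)
    (β c C : ℝ) (hβ : 0 < β) (hc : 0 < c) (hC : 0 < C)
    (hcount : ∀ Λ : ℝ, (lam 0) ^ 2 ≤ Λ →
      c * Λ ^ β ≤ (Nat.card {n : ℕ | (lam n) ^ 2 ≤ Λ} : ℝ) ∧
      (Nat.card {n : ℕ | (lam n) ^ 2 ≤ Λ} : ℝ) ≤ C * Λ ^ β)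
    (p : ℝ) (hp : β < p) :
    ∃ c' C' : ℝ, 0 < c' ∧ 0 < C' ∧ ∀ N : ℕ,
      c' * lam N ^ (-2 * p + 2 * β) ≤ (∑' n : ℕ, lam (N + 1 + n) ^ (-2 * p)) ∧
      (∑' n : ℕ, lam (N + 1 + n) ^ (-2 * p)) ≤ C' * lam N ^ (-2 * p + 2 * β) := by
  obtain ⟨a, b, ha, hb, hab⟩ :=
    stmt8_lam_bounds lam hmono hpos htend β c C hβ hc hC hcount
  set q : ℝ := p * β⁻¹ with hqdef
  have hq : 1 < q := by
    have := mul_lt_mul_of_pos_right hp (inv_pos.2 hβ)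
    rwa [mul_inv_cancel₀ hβ.ne'] at this
  have hq1 : 0 < q - 1 := by linarith
  -- conversion of powers
  have hconv : ∀ (m : ℕ) (r : ℝ), (lam m ^ 2 : ℝ) ^ r = lam m ^ (2 * r) := by
    intro m r
    rw [← Real.rpow_natCast (lam m) 2, ← Real.rpow_mul (hpos m).le]
    norm_num
  -- termwise upper bound
  have hub : ∀ m : ℕ, lam m ^ (-2 * p) ≤ a ^ (-p) * ((m : ℝ) + 1) ^ (-q) := by
    intro m
    have h1 : lam m ^ (-2 * p) = (lam m ^ 2 : ℝ) ^ (-p) := by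
      rw [hconv m (-p)]; ring_nf
    have h2 : (lam m ^ 2 : ℝ) ^ (-p) ≤ (a * ((m : ℝ) + 1) ^ β⁻¹) ^ (-p) :=
      Real.rpow_le_rpow_of_nonpos (by positivity) (hab m).1 (by linarith)
    have h3 : (a * ((m : ℝ) + 1) ^ β⁻¹) ^ (-p)
        = a ^ (-p) * ((m : ℝ) + 1) ^ (-q) := by
      rw [Real.mul_rpow ha.le (by positivity), ← Real.rpow_mul (by positivity)]
      rw [hqdef]; ring_nf
    rw [h1, ← h3]; exact h2
  -- termwise lower bound
  have hlb : ∀ m : ℕ, b ^ (-p) * ((m : ℝ) + 1) ^ (-q) ≤ lam m ^ (-2 * p) := by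
    intro m
    have h1 : lam m ^ (-2 * p) = (lam m ^ 2 : ℝ) ^ (-p) := by
      rw [hconv m (-p)]; ring_nf
    have h2 : (b * ((m : ℝ) + 1) ^ β⁻¹) ^ (-p) ≤ (lam m ^ 2 : ℝ) ^ (-p) :=
      Real.rpow_le_rpow_of_nonpos (pow_pos (hpos m) 2) (hab m).2 (by linarith)
    have h3 : (b * ((m : ℝ) + 1) ^ β⁻¹) ^ (-p)
        = b ^ (-p) * ((m : ℝ) + 1) ^ (-q) := by
      rw [Real.mul_rpow hb.le (by positivity), ← Real.rpow_mul (by positivity)]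
      rw [hqdef]; ring_nf
    rw [h1, ← h3]; exact h2
  refine ⟨b ^ (-p) * 2 ^ (-q) * a ^ (p - β), a ^ (-p) * b ^ (p - β) / (q - 1),
    by positivity, by positivity, fun N => ?_⟩
  have hN1 : (0:ℝ) < (N : ℝ) + 1 := by positivity
  -- bounds for lam N ^ (-2p + 2β)
  have hconvN : lam N ^ (-2 * p + 2 * β) = (lam N ^ 2 : ℝ) ^ (β - p) := by
    rw [hconv N (β - p)]; ring_nf
  have hexp : β⁻¹ * (β - p) = 1 - q := by
    rw [hqdef]
    field_simp
  have hNup : lam N ^ (-2 * p + 2 * β) ≤ a ^ (β - p) * ((N : ℝ) + 1) ^ (1 - q) := by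
    rw [hconvN]
    have h2 : (lam N ^ 2 : ℝ) ^ (β - p) ≤ (a * ((N : ℝ) + 1) ^ β⁻¹) ^ (β - p) :=
      Real.rpow_le_rpow_of_nonpos (by positivity) (hab N).1 (by linarith)
    have h3 : (a * ((N : ℝ) + 1) ^ β⁻¹) ^ (β - p)
        = a ^ (β - p) * ((N : ℝ) + 1) ^ (1 - q) := by
      rw [Real.mul_rpow ha.le (by positivity), ← Real.rpow_mul (by positivity), hexp]
    rw [← h3]; exact h2
  have hNlo : b ^ (β - p) * ((N : ℝ) + 1) ^ (1 - q) ≤ lam N ^ (-2 * p + 2 * β) := by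
    rw [hconvN]
    have h2 : (b * ((N : ℝ) + 1) ^ β⁻¹) ^ (β - p) ≤ (lam N ^ 2 : ℝ) ^ (β - p) :=
      Real.rpow_le_rpow_of_nonpos (pow_pos (hpos N) 2) (hab N).2 (by linarith)
    have h3 : (b * ((N : ℝ) + 1) ^ β⁻¹) ^ (β - p)
        = b ^ (β - p) * ((N : ℝ) + 1) ^ (1 - q) := by
      rw [Real.mul_rpow hb.le (by positivity), ← Real.rpow_mul (by positivity), hexp]
    rw [← h3]; exact h2
  -- summability
  have hsum2 : Summable (fun n : ℕ => ((N : ℝ) + 2 + n) ^ (-q)) := by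
    have h1 : Summable (fun n : ℕ => ((n : ℝ)) ^ (-q)) :=
      Real.summable_nat_rpow.2 (by linarith)
    have h2 := (summable_nat_add_iff (N + 2)).2 h1
    refine h2.congr fun n => ?_
    push_cast
    ring_nf
  have hg : Summable (fun n : ℕ => a ^ (-p) * ((N : ℝ) + 2 + n) ^ (-q)) := hsum2.mul_left _
  have hcast : ∀ n : ℕ, ((N + 1 + n : ℕ) : ℝ) + 1 = (N : ℝ) + 2 + n := by
    intro n; push_cast; ring
  have hterm_ub : ∀ n : ℕ, lam (N + 1 + n) ^ (-2 * p)
      ≤ a ^ (-p) * ((N : ℝ) + 2 + n) ^ (-q) := by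
    intro n
    have := hub (N + 1 + n)
    rwa [hcast n] at this
  have hterm_lb : ∀ n : ℕ, b ^ (-p) * ((N : ℝ) + 2 + n) ^ (-q)
      ≤ lam (N + 1 + n) ^ (-2 * p) := by
    intro n
    have := hlb (N + 1 + n)
    rwa [hcast n] at this
  have hfnn : ∀ n : ℕ, 0 ≤ lam (N + 1 + n) ^ (-2 * p) :=
    fun n => Real.rpow_nonneg (hpos _).le _
  have hsumf : Summable (fun n : ℕ => lam (N + 1 + n) ^ (-2 * p)) :=
    Summable.of_nonneg_of_le hfnn hterm_ub hg
  constructor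
  · -- lower bound
    have hblock : ∀ k ∈ Finset.range (N + 1),
        b ^ (-p) * (2 * ((N : ℝ) + 1)) ^ (-q) ≤ lam (N + 1 + k) ^ (-2 * p) := by
      intro k hk
      refine le_trans ?_ (hterm_lb k)
      have hkN : (k : ℝ) ≤ (N : ℝ) := by
        exact_mod_cast Nat.lt_succ_iff.mp (Finset.mem_range.mp hk)
      have : ((N : ℝ) + 2 + k) ≤ 2 * ((N : ℝ) + 1) := by linarith
      have hmono2 : (2 * ((N : ℝ) + 1)) ^ (-q) ≤ ((N : ℝ) + 2 + k) ^ (-q) :=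
        Real.rpow_le_rpow_of_nonpos (by positivity) this (by linarith)
      have hbp : (0:ℝ) ≤ b ^ (-p) := Real.rpow_nonneg hb.le _
      exact mul_le_mul_of_nonneg_left hmono2 hbp
    have hsum_ge : (N + 1 : ℝ) * (b ^ (-p) * (2 * ((N : ℝ) + 1)) ^ (-q))
        ≤ ∑' n : ℕ, lam (N + 1 + n) ^ (-2 * p) := by
      calc (N + 1 : ℝ) * (b ^ (-p) * (2 * ((N : ℝ) + 1)) ^ (-q))
          = ∑ k ∈ Finset.range (N + 1), b ^ (-p) * (2 * ((N : ℝ) + 1)) ^ (-q) := by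
            rw [Finset.sum_const, Finset.card_range]; push_cast; ring
        _ ≤ ∑ k ∈ Finset.range (N + 1), lam (N + 1 + k) ^ (-2 * p) :=
            Finset.sum_le_sum hblock
        _ ≤ ∑' n : ℕ, lam (N + 1 + n) ^ (-2 * p) :=
            Summable.sum_le_tsum _ (fun i _ => hfnn i) hsumf
    have hrw : (N + 1 : ℝ) * (b ^ (-p) * (2 * ((N : ℝ) + 1)) ^ (-q))
        = b ^ (-p) * 2 ^ (-q) * ((N : ℝ) + 1) ^ (1 - q) := by
      rw [Real.mul_rpow (by norm_num) hN1.le]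
      have h1 : ((N : ℝ) + 1) ^ (1 - q) = ((N : ℝ) + 1) * ((N : ℝ) + 1) ^ (-q) := by
        rw [show (1 - q : ℝ) = 1 + (-q) by ring, Real.rpow_add hN1, Real.rpow_one]
      rw [h1]; ring
    rw [hrw] at hsum_ge
    refine le_trans ?_ hsum_ge
    -- c' * lamN ≤ b^{-p} 2^{-q} (N+1)^{1-q}
    have haa : a ^ (p - β) * a ^ (β - p) = 1 := by
      rw [← Real.rpow_add ha]; norm_num
    have h9 : a ^ (p - β) * lam N ^ (-2 * p + 2 * β)
        ≤ a ^ (p - β) * (a ^ (β - p) * ((N : ℝ) + 1) ^ (1 - q)) :=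
      mul_le_mul_of_nonneg_left hNup (Real.rpow_nonneg ha.le _)
    rw [← mul_assoc, haa, one_mul] at h9
    calc b ^ (-p) * 2 ^ (-q) * a ^ (p - β) * lam N ^ (-2 * p + 2 * β)
        = b ^ (-p) * 2 ^ (-q) * (a ^ (p - β) * lam N ^ (-2 * p + 2 * β)) := by ring
      _ ≤ b ^ (-p) * 2 ^ (-q) * ((N : ℝ) + 1) ^ (1 - q) := by
          refine mul_le_mul_of_nonneg_left h9 ?_
          positivity
  · -- upper bound
    have htail : (∑' n : ℕ, ((N : ℝ) + 2 + n) ^ (-q)) ≤ ((N : ℝ) + 1) ^ (1 - q) / (q - 1) := by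
      have := stmt8_tail hq (N + 1) (by omega)
      have hc1 : ((N + 1 : ℕ) : ℝ) = (N : ℝ) + 1 := by push_cast; ring
      rw [hc1] at this
      refine le_trans (le_of_eq (tsum_congr fun n => ?_)) this
      ring_nf
    have h10 : (∑' n : ℕ, lam (N + 1 + n) ^ (-2 * p))
        ≤ ∑' n : ℕ, a ^ (-p) * ((N : ℝ) + 2 + n) ^ (-q) :=
      Summable.tsum_le_tsum hterm_ub hsumf hg
    rw [tsum_mul_left] at h10
    have hbb : b ^ (p - β) * b ^ (β - p) = 1 := by
      rw [← Real.rpow_add hb]; norm_num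
    have h11 : ((N : ℝ) + 1) ^ (1 - q) ≤ b ^ (p - β) * lam N ^ (-2 * p + 2 * β) := by
      have h12 : b ^ (p - β) * (b ^ (β - p) * ((N : ℝ) + 1) ^ (1 - q))
          ≤ b ^ (p - β) * lam N ^ (-2 * p + 2 * β) :=
        mul_le_mul_of_nonneg_left hNlo (Real.rpow_nonneg hb.le _)
      rwa [← mul_assoc, hbb, one_mul] at h12
    calc (∑' n : ℕ, lam (N + 1 + n) ^ (-2 * p))
        ≤ a ^ (-p) * ∑' n : ℕ, ((N : ℝ) + 2 + n) ^ (-q) := h10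
      _ ≤ a ^ (-p) * (((N : ℝ) + 1) ^ (1 - q) / (q - 1)) := by
          refine mul_le_mul_of_nonneg_left htail (Real.rpow_nonneg ha.le _)
      _ ≤ a ^ (-p) * ((b ^ (p - β) * lam N ^ (-2 * p + 2 * β)) / (q - 1)) := by
          refine mul_le_mul_of_nonneg_left ?_ (Real.rpow_nonneg ha.le _)
          exact (div_le_div_iff_of_pos_right hq1).2 h11
      _ = a ^ (-p) * b ^ (p - β) / (q - 1) * lam N ^ (-2 * p + 2 * β) := by ring
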